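/- Let f0(t,c) denote a version of the conditional expectation E[Y | T = t, C = c], and define CATE(c) = f0(1,c) − f0(0,c). Then, with e_orig and e_switch defined from the squared error loss, e_switch(f0) − e_orig(f0) = Var(T) · ( E[CATE(C)² · 1{T=0}]/P(T=0) + E[CATE(C)² · 1{T=1}]/P(T=1) ), where Var(T) = P(T=0)·P(T=1) is the marginal variance of the binary treatment T. -/

import Mathlib

open MeasureTheory

/-- Auxiliary: multiplying an integrable function by a `{0,1}`-valued
a.e.-strongly-measurable function preserves integrability. -/
theorem stmt_0_aux_bdd01_mul {Ω : Type*} [MeasurableSpace Ω] {μ : Measure Ω}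
    {T u : Ω → ℝ} (hTm : AEStronglyMeasurable T μ) (hT01 : ∀ ω, T ω = 0 ∨ T ω = 1)
    (hu : Integrable u μ) : Integrable (fun ω => T ω * u ω) μ := by
  refine hu.bdd_mul (c := 1) hTm (Filter.Eventually.of_forall fun ω => ?_)
  rcases hT01 ω with h | h <;> simp [h]

/-- Theorem 1: connection between model reliance of the conditional expectation
function `f0` on a binary treatment `T` and the conditional average treatment
effect `CATE(c) = f0(1,c) − f0(0,c)`:
`e_switch(f0) − e_orig(f0) = Var(T)·(E[CATE(C)²1{T=0}]/P(T=0) + E[CATE(C)²1{T=1}]/P(T=1))`,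
where `Var(T) = P(T=0)·P(T=1)`. -/
theorem stmt_0 {Ω 𝒞 : Type*} [MeasurableSpace Ω] [MeasurableSpace 𝒞]
    (μ : Measure Ω) [IsProbabilityMeasure μ]
    (Y T : Ω → ℝ) (C : Ω → 𝒞)
    (hYm : Measurable Y) (hTm : Measurable T) (hCm : Measurable C)
    (hT01 : ∀ ω, T ω = 0 ∨ T ω = 1)
    (hT0 : 0 < μ {ω | T ω = 0}) (hT1 : 0 < μ {ω | T ω = 1})
    (f0 : ℝ → 𝒞 → ℝ)
    (hf0m : Measurable fun q : ℝ × 𝒞 => f0 q.1 q.2)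
    (hY2 : Integrable (fun ω => (Y ω) ^ 2) μ)
    (hf02 : ∀ t ∈ ({0, 1} : Set ℝ), Integrable (fun ω => (f0 t (C ω)) ^ 2) μ)
    -- `f0(t, ·)` is a version of `E[Y ∣ T = t, C = ·]`:
    (hortho : ∀ t ∈ ({0, 1} : Set ℝ), ∀ g : 𝒞 → ℝ, Measurable g →
      Integrable (fun ω => (g (C ω)) ^ 2) μ →
      ∫ ω, (Y ω - f0 t (C ω)) * (if T ω = t then 1 else 0) * g (C ω) ∂μ = 0) :
    (∫ q : Ω × Ω, (Y q.2 - f0 (T q.1) (C q.2)) ^ 2 ∂(μ.prod μ))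
        - (∫ ω, (Y ω - f0 (T ω) (C ω)) ^ 2 ∂μ)
      = ((μ {ω | T ω = 0}).toReal * (μ {ω | T ω = 1}).toReal) *
        ((∫ ω, (f0 1 (C ω) - f0 0 (C ω)) ^ 2 * (if T ω = 0 then 1 else 0) ∂μ) /
            (μ {ω | T ω = 0}).toReal
          + (∫ ω, (f0 1 (C ω) - f0 0 (C ω)) ^ 2 * (if T ω = 1 then 1 else 0) ∂μ) /
            (μ {ω | T ω = 1}).toReal) := by
  have hs0 : MeasurableSet {ω | T ω = 0} := hTm (measurableSet_singleton 0)
  have hs1 : MeasurableSet {ω | T ω = 1} := hTm (measurableSet_singleton 1)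
  set p0 : ℝ := (μ {ω | T ω = 0}).toReal with hp0def
  set p1 : ℝ := (μ {ω | T ω = 1}).toReal with hp1def
  have hp0pos : 0 < p0 := ENNReal.toReal_pos hT0.ne' (measure_ne_top μ _)
  have hp1pos : 0 < p1 := ENNReal.toReal_pos hT1.ne' (measure_ne_top μ _)
  have hsum : p0 + p1 = 1 := by
    have hdisj : Disjoint {ω | T ω = 0} {ω | T ω = 1} := by
      rw [Set.disjoint_left]
      intro ω h0 h1
      simp only [Set.mem_setOf_eq] at h0 h1
      rw [h0] at h1; norm_num at h1
    have huniv : {ω | T ω = 0} ∪ {ω | T ω = 1} = Set.univ := by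
      ext ω; simpa using hT01 ω
    have : μ {ω | T ω = 0} + μ {ω | T ω = 1} = 1 := by
      rw [← measure_union hdisj hs1, huniv, measure_univ]
    rw [hp0def, hp1def, ← ENNReal.toReal_add (measure_ne_top μ _) (measure_ne_top μ _), this]
    simp
  -- measurability of composed functions
  have hf0Cm : ∀ t : ℝ, Measurable fun ω => f0 t (C ω) := fun t =>
    hf0m.comp (measurable_const.prodMk hCm)
  have hDm : Measurable fun c : 𝒞 => f0 1 c - f0 0 c := by
    exact (hf0m.comp (measurable_const.prodMk measurable_id)).sub
      (hf0m.comp (measurable_const.prodMk measurable_id))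
  -- `{0,1}`-valued weights
  have h1T01 : ∀ ω, (1 : ℝ) - T ω = 0 ∨ (1 : ℝ) - T ω = 1 := by
    intro ω; rcases hT01 ω with h | h <;> simp [h]
  have h1Tm : Measurable fun ω => (1 : ℝ) - T ω := measurable_const.sub hTm
  -- L² facts
  have hYL2 : MemLp Y 2 μ := (memLp_two_iff_integrable_sq hYm.aestronglyMeasurable).2 hY2
  have hfL2 : ∀ t ∈ ({0, 1} : Set ℝ), MemLp (fun ω => f0 t (C ω)) 2 μ := fun t ht =>
    (memLp_two_iff_integrable_sq (hf0Cm t).aestronglyMeasurable).2 (hf02 t ht)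
  have hu2 : Integrable (fun ω => (Y ω - f0 0 (C ω)) ^ 2) μ :=
    (hYL2.sub (hfL2 0 (by norm_num))).integrable_sq
  have hv2 : Integrable (fun ω => (Y ω - f0 1 (C ω)) ^ 2) μ :=
    (hYL2.sub (hfL2 1 (by norm_num))).integrable_sq
  have hk2 : Integrable (fun ω => (f0 1 (C ω) - f0 0 (C ω)) ^ 2) μ :=
    ((hfL2 1 (by norm_num)).sub (hfL2 0 (by norm_num))).integrable_sq
  -- products of the two L² residuals with the CATE are integrable
  have hvk : Integrable (fun ω => (Y ω - f0 1 (C ω)) * (f0 1 (C ω) - f0 0 (C ω))) μ := by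
    have h : Integrable (fun ω => ((Y ω - f0 0 (C ω)) ^ 2 - (Y ω - f0 1 (C ω)) ^ 2
        - (f0 1 (C ω) - f0 0 (C ω)) ^ 2) / 2) μ := ((hu2.sub hv2).sub hk2).div_const 2
    refine h.congr (Filter.Eventually.of_forall fun ω => ?_)
    ring
  have huk : Integrable (fun ω => (Y ω - f0 0 (C ω)) * (f0 1 (C ω) - f0 0 (C ω))) μ := by
    have h : Integrable (fun ω => ((Y ω - f0 0 (C ω)) ^ 2 + (f0 1 (C ω) - f0 0 (C ω)) ^ 2
        - (Y ω - f0 1 (C ω)) ^ 2) / 2) μ := ((hu2.add hk2).sub hv2).div_const 2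
    refine h.congr (Filter.Eventually.of_forall fun ω => ?_)
    ring
  -- name the six basic integrals
  set a0 : ℝ := ∫ ω, (1 - T ω) * (Y ω - f0 0 (C ω)) ^ 2 ∂μ with ha0def
  set a1 : ℝ := ∫ ω, T ω * (Y ω - f0 0 (C ω)) ^ 2 ∂μ with ha1def
  set b0 : ℝ := ∫ ω, (1 - T ω) * (Y ω - f0 1 (C ω)) ^ 2 ∂μ with hb0def
  set b1 : ℝ := ∫ ω, T ω * (Y ω - f0 1 (C ω)) ^ 2 ∂μ with hb1def
  -- integrability of weighted squares
  have ha0i : Integrable (fun ω => (1 - T ω) * (Y ω - f0 0 (C ω)) ^ 2) μ :=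
    stmt_0_aux_bdd01_mul h1Tm.aestronglyMeasurable h1T01 hu2
  have ha1i : Integrable (fun ω => T ω * (Y ω - f0 0 (C ω)) ^ 2) μ :=
    stmt_0_aux_bdd01_mul hTm.aestronglyMeasurable hT01 hu2
  have hb0i : Integrable (fun ω => (1 - T ω) * (Y ω - f0 1 (C ω)) ^ 2) μ :=
    stmt_0_aux_bdd01_mul h1Tm.aestronglyMeasurable h1T01 hv2
  have hb1i : Integrable (fun ω => T ω * (Y ω - f0 1 (C ω)) ^ 2) μ :=
    stmt_0_aux_bdd01_mul hTm.aestronglyMeasurable hT01 hv2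
  have hd0i : Integrable (fun ω => (f0 1 (C ω) - f0 0 (C ω)) ^ 2 * (if T ω = 0 then 1 else 0)) μ := by
    have h01 : ∀ ω, (if T ω = (0:ℝ) then (1:ℝ) else 0) = 0 ∨ (if T ω = (0:ℝ) then (1:ℝ) else 0) = 1 := by
      intro ω; by_cases h : T ω = 0 <;> simp [h]
    have hm : Measurable fun ω => if T ω = (0:ℝ) then (1:ℝ) else 0 :=
      Measurable.ite hs0 measurable_const measurable_const
    have := stmt_0_aux_bdd01_mul (T := fun ω => if T ω = (0:ℝ) then (1:ℝ) else 0)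
      hm.aestronglyMeasurable h01 hk2
    refine this.congr (Filter.Eventually.of_forall fun ω => ?_)
    ring
  have hd1i : Integrable (fun ω => (f0 1 (C ω) - f0 0 (C ω)) ^ 2 * (if T ω = 1 then 1 else 0)) μ := by
    have h01 : ∀ ω, (if T ω = (1:ℝ) then (1:ℝ) else 0) = 0 ∨ (if T ω = (1:ℝ) then (1:ℝ) else 0) = 1 := by
      intro ω; by_cases h : T ω = 1 <;> simp [h]
    have hm : Measurable fun ω => if T ω = (1:ℝ) then (1:ℝ) else 0 :=
      Measurable.ite hs1 measurable_const measurable_const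
    have := stmt_0_aux_bdd01_mul (T := fun ω => if T ω = (1:ℝ) then (1:ℝ) else 0)
      hm.aestronglyMeasurable h01 hk2
    refine this.congr (Filter.Eventually.of_forall fun ω => ?_)
    ring
  set d0 : ℝ := ∫ ω, (f0 1 (C ω) - f0 0 (C ω)) ^ 2 * (if T ω = 0 then 1 else 0) ∂μ with hd0def
  set d1 : ℝ := ∫ ω, (f0 1 (C ω) - f0 0 (C ω)) ^ 2 * (if T ω = 1 then 1 else 0) ∂μ with hd1def
  -- ∫ T = p1 and ∫ (1 - T) = p0
  have hTint : ∫ ω, T ω ∂μ = p1 := by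
    have : (fun ω => T ω) = Set.indicator {ω | T ω = 1} (fun _ => (1:ℝ)) := by
      funext ω
      rcases hT01 ω with h | h <;>
        simp [Set.indicator_apply, Set.mem_setOf_eq, h]
    rw [this, integral_indicator_const _ hs1]
    simp [hp1def, measureReal_def]
  have h1Tint : ∫ ω, (1 : ℝ) - T ω ∂μ = p0 := by
    have : (fun ω => (1:ℝ) - T ω) = Set.indicator {ω | T ω = 0} (fun _ => (1:ℝ)) := by
      funext ω
      rcases hT01 ω with h | h <;>
        simp [Set.indicator_apply, Set.mem_setOf_eq, h]
    rw [this, integral_indicator_const _ hs0]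
    simp [hp0def, measureReal_def]
  -- integrability of T itself
  have hTi : Integrable T μ := by
    have := stmt_0_aux_bdd01_mul (μ := μ) hTm.aestronglyMeasurable hT01 (integrable_const (1:ℝ))
    refine this.congr (Filter.Eventually.of_forall fun ω => ?_); simp
  have h1Ti : Integrable (fun ω => (1:ℝ) - T ω) μ := (integrable_const 1).sub hTi
  -- Step 1: the switched loss
  have hswitch : (∫ q : Ω × Ω, (Y q.2 - f0 (T q.1) (C q.2)) ^ 2 ∂(μ.prod μ))
      = p0 * (∫ ω, (Y ω - f0 0 (C ω)) ^ 2 ∂μ) + p1 * (∫ ω, (Y ω - f0 1 (C ω)) ^ 2 ∂μ) := by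
    have hpt : ∀ q : Ω × Ω, (Y q.2 - f0 (T q.1) (C q.2)) ^ 2
        = (1 - T q.1) * (Y q.2 - f0 0 (C q.2)) ^ 2 + T q.1 * (Y q.2 - f0 1 (C q.2)) ^ 2 := by
      intro q; rcases hT01 q.1 with h | h <;> simp [h]
    rw [integral_congr_ae (Filter.Eventually.of_forall hpt)]
    rw [integral_add (h1Ti.mul_prod hu2) (hTi.mul_prod hv2)]
    have e1 : (∫ a : Ω × Ω, (1 - T a.1) * (Y a.2 - f0 0 (C a.2)) ^ 2 ∂(μ.prod μ))
        = p0 * ∫ ω, (Y ω - f0 0 (C ω)) ^ 2 ∂μ := by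
      rw [← h1Tint]
      exact integral_prod_mul (f := fun ω => (1:ℝ) - T ω)
        (g := fun ω => (Y ω - f0 0 (C ω)) ^ 2)
    have e2 : (∫ a : Ω × Ω, T a.1 * (Y a.2 - f0 1 (C a.2)) ^ 2 ∂(μ.prod μ))
        = p1 * ∫ ω, (Y ω - f0 1 (C ω)) ^ 2 ∂μ := by
      rw [← hTint]
      exact integral_prod_mul (f := T) (g := fun ω => (Y ω - f0 1 (C ω)) ^ 2)
    rw [e1, e2]
  -- Step 2: the original loss
  have horig : (∫ ω, (Y ω - f0 (T ω) (C ω)) ^ 2 ∂μ) = a0 + b1 := by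
    have hpt : ∀ ω, (Y ω - f0 (T ω) (C ω)) ^ 2
        = (1 - T ω) * (Y ω - f0 0 (C ω)) ^ 2 + T ω * (Y ω - f0 1 (C ω)) ^ 2 := by
      intro ω; rcases hT01 ω with h | h <;> simp [h]
    rw [integral_congr_ae (Filter.Eventually.of_forall hpt), integral_add ha0i hb1i]
  -- Step 3: split the full squares
  have husplit : (∫ ω, (Y ω - f0 0 (C ω)) ^ 2 ∂μ) = a0 + a1 := by
    have hpt : ∀ ω, (Y ω - f0 0 (C ω)) ^ 2
        = (1 - T ω) * (Y ω - f0 0 (C ω)) ^ 2 + T ω * (Y ω - f0 0 (C ω)) ^ 2 := by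
      intro ω; ring
    rw [integral_congr_ae (Filter.Eventually.of_forall hpt), integral_add ha0i ha1i]
  have hvsplit : (∫ ω, (Y ω - f0 1 (C ω)) ^ 2 ∂μ) = b0 + b1 := by
    have hpt : ∀ ω, (Y ω - f0 1 (C ω)) ^ 2
        = (1 - T ω) * (Y ω - f0 1 (C ω)) ^ 2 + T ω * (Y ω - f0 1 (C ω)) ^ 2 := by
      intro ω; ring
    rw [integral_congr_ae (Filter.Eventually.of_forall hpt), integral_add hb0i hb1i]
  -- orthogonality at t = 1 and t = 0 with g = CATE
  have horth1 : ∫ ω, (Y ω - f0 1 (C ω)) * (if T ω = 1 then 1 else 0)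
      * (f0 1 (C ω) - f0 0 (C ω)) ∂μ = 0 :=
    hortho 1 (by norm_num) (fun c => f0 1 c - f0 0 c) hDm hk2
  have horth0 : ∫ ω, (Y ω - f0 0 (C ω)) * (if T ω = 0 then 1 else 0)
      * (f0 1 (C ω) - f0 0 (C ω)) ∂μ = 0 :=
    hortho 0 (by norm_num) (fun c => f0 1 c - f0 0 c) hDm hk2
  -- cross terms are integrable
  have hcross1 : Integrable (fun ω => (Y ω - f0 1 (C ω)) * (if T ω = 1 then 1 else 0)
      * (f0 1 (C ω) - f0 0 (C ω))) μ := by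
    have h01 : ∀ ω, (if T ω = (1:ℝ) then (1:ℝ) else 0) = 0 ∨ (if T ω = (1:ℝ) then (1:ℝ) else 0) = 1 := by
      intro ω; by_cases h : T ω = 1 <;> simp [h]
    have hm : Measurable fun ω => if T ω = (1:ℝ) then (1:ℝ) else 0 :=
      Measurable.ite hs1 measurable_const measurable_const
    have := stmt_0_aux_bdd01_mul (T := fun ω => if T ω = (1:ℝ) then (1:ℝ) else 0)
      hm.aestronglyMeasurable h01 hvk
    refine this.congr (Filter.Eventually.of_forall fun ω => ?_); ring
  have hcross0 : Integrable (fun ω => (Y ω - f0 0 (C ω)) * (if T ω = 0 then 1 else 0)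
      * (f0 1 (C ω) - f0 0 (C ω))) μ := by
    have h01 : ∀ ω, (if T ω = (0:ℝ) then (1:ℝ) else 0) = 0 ∨ (if T ω = (0:ℝ) then (1:ℝ) else 0) = 1 := by
      intro ω; by_cases h : T ω = 0 <;> simp [h]
    have hm : Measurable fun ω => if T ω = (0:ℝ) then (1:ℝ) else 0 :=
      Measurable.ite hs0 measurable_const measurable_const
    have := stmt_0_aux_bdd01_mul (T := fun ω => if T ω = (0:ℝ) then (1:ℝ) else 0)
      hm.aestronglyMeasurable h01 huk
    refine this.congr (Filter.Eventually.of_forall fun ω => ?_); ring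
  -- Step 4: key identities a1 = b1 + d1 and b0 = a0 + d0
  have hF3 : a1 = b1 + d1 := by
    have hpt : ∀ ω, T ω * (Y ω - f0 0 (C ω)) ^ 2
        = T ω * (Y ω - f0 1 (C ω)) ^ 2
          + (2 * ((Y ω - f0 1 (C ω)) * (if T ω = 1 then 1 else 0) * (f0 1 (C ω) - f0 0 (C ω)))
            + (f0 1 (C ω) - f0 0 (C ω)) ^ 2 * (if T ω = 1 then 1 else 0)) := by
      intro ω; rcases hT01 ω with h | h <;> simp [h] <;> ring
    have hc2 : Integrable (fun ω => 2 * ((Y ω - f0 1 (C ω)) * (if T ω = 1 then 1 else 0)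
        * (f0 1 (C ω) - f0 0 (C ω)))) μ := hcross1.const_mul 2
    have hrest : Integrable (fun ω => 2 * ((Y ω - f0 1 (C ω)) * (if T ω = 1 then 1 else 0)
        * (f0 1 (C ω) - f0 0 (C ω)))
        + (f0 1 (C ω) - f0 0 (C ω)) ^ 2 * (if T ω = 1 then 1 else 0)) μ := hc2.add hd1i
    rw [ha1def, integral_congr_ae (Filter.Eventually.of_forall hpt),
      integral_add hb1i hrest, integral_add hc2 hd1i,
      integral_const_mul, horth1]
    ring
  have hF4 : b0 = a0 + d0 := by
    have hpt : ∀ ω, (1 - T ω) * (Y ω - f0 1 (C ω)) ^ 2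
        = (1 - T ω) * (Y ω - f0 0 (C ω)) ^ 2
          + ((-2) * ((Y ω - f0 0 (C ω)) * (if T ω = 0 then 1 else 0) * (f0 1 (C ω) - f0 0 (C ω)))
            + (f0 1 (C ω) - f0 0 (C ω)) ^ 2 * (if T ω = 0 then 1 else 0)) := by
      intro ω; rcases hT01 ω with h | h <;> simp [h] <;> ring
    have hc2 : Integrable (fun ω => (-2) * ((Y ω - f0 0 (C ω)) * (if T ω = 0 then 1 else 0)
        * (f0 1 (C ω) - f0 0 (C ω)))) μ := hcross0.const_mul (-2)
    have hrest : Integrable (fun ω => (-2) * ((Y ω - f0 0 (C ω)) * (if T ω = 0 then 1 else 0)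
        * (f0 1 (C ω) - f0 0 (C ω)))
        + (f0 1 (C ω) - f0 0 (C ω)) ^ 2 * (if T ω = 0 then 1 else 0)) μ := hc2.add hd0i
    rw [hb0def, integral_congr_ae (Filter.Eventually.of_forall hpt),
      integral_add ha0i hrest, integral_add hc2 hd0i,
      integral_const_mul, horth0]
    ring
  -- conclusion
  rw [hswitch, horig, husplit, hvsplit, hF3, hF4]
  field_simp
  linear_combination (a0 + b1) * hsum
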